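/- Let (Ω, ℱ, P) be a probability space, m a positive integer, T > 0, C ≥ 1, and x : [0,∞) × Ω → ℝ^n jointly measurable. Let Z_k : Ω → [0,∞), k ≥ 0, satisfy almost surely: Z₀ = 0, Z_k ≤ Z_{k+1}, Z_{k+1} − Z_k ≤ T, sup_k Z_k = ∞, and ‖x(t)‖ ≤ C‖x(Z_k)‖ whenever Z_k ≤ t ≤ Z_{k+1}. If there exist α, β > 0 such that E[‖x(Z_k)‖^m] ≤ α e^{−βk} for all k ≥ 0, then E[‖x(t)‖^m] ≤ α′ e^{−β′ t} for all t ≥ 0, where α′ = C^m α e^{β}/(1 − e^{−β}) and β′ = β/T. -/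
import Mathlib


open scoped BigOperators
open MeasureTheory

noncomputable section

/-- The Euclidean norm of a vector in `ℝⁿ`. -/
def euclNorm {n : ℕ} (x : Fin n → ℝ) : ℝ := Real.sqrt (∑ i, x i ^ 2)

lemma euclNorm_nonneg {n : ℕ} (x : Fin n → ℝ) : 0 ≤ euclNorm x :=
  Real.sqrt_nonneg _

lemma continuous_euclNorm {n : ℕ} : Continuous (euclNorm (n := n)) :=
  Real.continuous_sqrt.comp (continuous_finset_sum _ fun i _ => (continuous_apply i).pow 2)

/-- If a jointly measurable process `x` sampled at renewal times `Z_k`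
(with `Z₀ = 0`, gaps at most `T`, `sup_k Z_k = ∞`, and the comparison
`‖x(t)‖ ≤ C‖x(Z_k)‖` on each cycle) satisfies `E[‖x(Z_k)‖^m] ≤ α e^{-βk}`, then
`E[‖x(t)‖^m] ≤ α' e^{-β' t}` for all `t ≥ 0`, where `α' = C^m α e^β/(1 - e^{-β})` and
`β' = β/T`. -/
theorem expDecay_of_sampled_expDecay {Ω : Type*} [MeasurableSpace Ω]
    (P : Measure Ω) [IsProbabilityMeasure P]
    (n m : ℕ) (hm : 0 < m) (T C : ℝ) (hT : 0 < T) (hC : 1 ≤ C)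
    (x : ℝ → Ω → Fin n → ℝ)
    (hxmeas : Measurable (Function.uncurry x))
    (Z : ℕ → Ω → ℝ) (hZmeas : ∀ k, Measurable (Z k))
    (hZ : ∀ᵐ ω ∂P,
      Z 0 ω = 0 ∧
      (∀ k, Z k ω ≤ Z (k + 1) ω) ∧
      (∀ k, Z (k + 1) ω - Z k ω ≤ T) ∧
      (∀ t : ℝ, ∃ k, t ≤ Z k ω) ∧
      (∀ k, ∀ t, Z k ω ≤ t → t ≤ Z (k + 1) ω →
        euclNorm (x t ω) ≤ C * euclNorm (x (Z k ω) ω)))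
    (a b : ℝ) (ha : 0 < a) (hb : 0 < b)
    (hdecay : ∀ k : ℕ,
      (∫⁻ ω, ENNReal.ofReal (euclNorm (x (Z k ω) ω) ^ m) ∂P)
        ≤ ENNReal.ofReal (a * Real.exp (-b * k))) :
    ∀ t : ℝ, 0 ≤ t →
      (∫⁻ ω, ENNReal.ofReal (euclNorm (x t ω) ^ m) ∂P)
        ≤ ENNReal.ofReal
            (C ^ m * a * Real.exp b / (1 - Real.exp (-b)) * Real.exp (-(b / T) * t)) := by
  intro t ht
  have hC0 : (0:ℝ) < C := lt_of_lt_of_le one_pos hC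
  have hCm : (0:ℝ) ≤ C ^ m := le_of_lt (pow_pos hC0 m)
  set r : ℝ := Real.exp (-b) with hrdef
  have hr0 : 0 < r := Real.exp_pos _
  have hr1 : r < 1 := Real.exp_lt_one_iff.mpr (by linarith)
  set k₀ : ℕ := ⌈t / T⌉₊ - 1 with hk₀def
  -- measurability of the sampled norm
  have hmeasg : ∀ j : ℕ, Measurable fun ω => ENNReal.ofReal (C ^ m * euclNorm (x (Z j ω) ω) ^ m) := by
    intro j
    have h1 : Measurable fun ω => x (Z j ω) ω :=
      hxmeas.comp ((hZmeas j).prodMk measurable_id)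
    exact (measurable_const.mul ((continuous_euclNorm.measurable.comp h1).pow_const m)).ennreal_ofReal
  set f : ℕ → Ω → ENNReal := fun j =>
    Set.indicator {ω | Z (k₀ + j) ω ≤ t ∧ t ≤ Z (k₀ + j + 1) ω}
      (fun ω => ENNReal.ofReal (C ^ m * euclNorm (x (Z (k₀ + j) ω) ω) ^ m)) with hfdef
  have hfmeas : ∀ j, Measurable (f j) := by
    intro j
    refine Measurable.indicator (hmeasg _) ?_
    exact (measurableSet_le (hZmeas _) measurable_const).inter
      (measurableSet_le measurable_const (hZmeas _))
  -- pointwise a.e. bound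
  have hpt : ∀ᵐ ω ∂P,
      ENNReal.ofReal (euclNorm (x t ω) ^ m) ≤ ∑' j, f j ω := by
    filter_upwards [hZ] with ω hω
    obtain ⟨h0, hmono, hgap, hsup, hcomp⟩ := hω
    have hex : ∃ k, t ≤ Z (k + 1) ω := by
      obtain ⟨k, hk⟩ := hsup t
      exact ⟨k, hk.trans (hmono k)⟩
    set k := Nat.find hex with hkdef
    have hk1 : t ≤ Z (k + 1) ω := Nat.find_spec hex
    have hk0 : Z k ω ≤ t := by
      rcases Nat.eq_zero_or_pos k with hk | hk
      · rw [hk, h0]; exact ht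
      · obtain ⟨j, hj⟩ := Nat.exists_eq_succ_of_ne_zero hk.ne'
        have hjlt : j < k := by omega
        rw [hkdef] at hjlt
        rw [hj]
        exact le_of_lt (lt_of_not_ge (Nat.find_min hex hjlt))
    have hZle : ∀ j : ℕ, Z j ω ≤ j * T := by
      intro j
      induction j with
      | zero => simp [h0]
      | succ j ih =>
        have := hgap j
        push_cast
        linarith
    have hkk₀ : k₀ ≤ k := by
      have h1 : t ≤ ((k:ℝ) + 1) * T := le_trans hk1 (by exact_mod_cast hZle (k + 1))
      have h2 : t / T ≤ (k : ℝ) + 1 := (div_le_iff₀ hT).mpr (by linarith)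
      have h3 : ⌈t / T⌉₊ ≤ k + 1 := Nat.ceil_le.mpr (by exact_mod_cast h2)
      omega
    have hkey : f (k - k₀) ω = ENNReal.ofReal (C ^ m * euclNorm (x (Z k ω) ω) ^ m) := by
      have hkk : k₀ + (k - k₀) = k := by omega
      rw [hfdef]
      simp only [hkk]
      exact Set.indicator_of_mem
        (show ω ∈ {ω | Z k ω ≤ t ∧ t ≤ Z (k + 1) ω} from ⟨hk0, hk1⟩) _
    have hbnd : euclNorm (x t ω) ^ m ≤ C ^ m * euclNorm (x (Z k ω) ω) ^ m := by
      rw [← mul_pow]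
      exact pow_le_pow_left₀ (euclNorm_nonneg _) (hcomp k t hk0 hk1) m
    calc ENNReal.ofReal (euclNorm (x t ω) ^ m)
        ≤ f (k - k₀) ω := by rw [hkey]; exact ENNReal.ofReal_le_ofReal hbnd
      _ ≤ ∑' j, f j ω := ENNReal.le_tsum _
  -- term bound
  have hterm : ∀ j : ℕ, (∫⁻ ω, f j ω ∂P)
      ≤ ENNReal.ofReal ((C ^ m * a * Real.exp (-b * k₀)) * r ^ j) := by
    intro j
    have h1 : (∫⁻ ω, f j ω ∂P)
        ≤ ∫⁻ ω, ENNReal.ofReal (C ^ m * euclNorm (x (Z (k₀ + j) ω) ω) ^ m) ∂P :=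
      lintegral_mono fun ω => Set.indicator_le_self _ _ ω
    have h2 : (∫⁻ ω, ENNReal.ofReal (C ^ m * euclNorm (x (Z (k₀ + j) ω) ω) ^ m) ∂P)
        ≤ ENNReal.ofReal (C ^ m) * ENNReal.ofReal (a * Real.exp (-b * (k₀ + j : ℕ))) := by
      calc (∫⁻ ω, ENNReal.ofReal (C ^ m * euclNorm (x (Z (k₀ + j) ω) ω) ^ m) ∂P)
          = ∫⁻ ω, ENNReal.ofReal (C ^ m) * ENNReal.ofReal (euclNorm (x (Z (k₀ + j) ω) ω) ^ m) ∂P := by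
            congr 1; ext ω; rw [← ENNReal.ofReal_mul hCm]
        _ = ENNReal.ofReal (C ^ m) * ∫⁻ ω, ENNReal.ofReal (euclNorm (x (Z (k₀ + j) ω) ω) ^ m) ∂P := by
            rw [lintegral_const_mul]
            have h1 : Measurable fun ω => x (Z (k₀ + j) ω) ω :=
              hxmeas.comp ((hZmeas _).prodMk measurable_id)
            exact ((continuous_euclNorm.measurable.comp h1).pow_const m).ennreal_ofReal
        _ ≤ _ := mul_le_mul_right (hdecay (k₀ + j)) _
    have heq : C ^ m * (a * Real.exp (-b * (k₀ + j : ℕ))) = (C ^ m * a * Real.exp (-b * k₀)) * r ^ j := by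
      rw [hrdef, ← Real.exp_nat_mul]
      push_cast
      rw [show -b * ((k₀:ℝ) + (j:ℝ)) = -b * k₀ + (j:ℝ) * -b by ring, Real.exp_add]
      ring
    calc (∫⁻ ω, f j ω ∂P) ≤ _ := le_trans h1 h2
      _ = ENNReal.ofReal (C ^ m * (a * Real.exp (-b * (k₀ + j : ℕ)))) := by
          rw [← ENNReal.ofReal_mul hCm]
      _ = _ := by rw [heq]
  -- sum the geometric series
  have hsummable : Summable fun j : ℕ => (C ^ m * a * Real.exp (-b * k₀)) * r ^ j :=
    (summable_geometric_of_lt_one hr0.le hr1).mul_left _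
  have hnn : ∀ j : ℕ, 0 ≤ (C ^ m * a * Real.exp (-b * k₀)) * r ^ j := fun j =>
    mul_nonneg (mul_nonneg (mul_nonneg hCm ha.le) (Real.exp_pos _).le) (pow_nonneg hr0.le j)
  have htsum : (∑' j : ℕ, ENNReal.ofReal ((C ^ m * a * Real.exp (-b * k₀)) * r ^ j))
      = ENNReal.ofReal (C ^ m * a * Real.exp (-b * k₀) / (1 - r)) := by
    rw [← ENNReal.ofReal_tsum_of_nonneg hnn hsummable, tsum_mul_left,
      tsum_geometric_of_lt_one hr0.le hr1, div_eq_mul_inv]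
  -- final real inequality
  have hfinal : C ^ m * a * Real.exp (-b * k₀) / (1 - r)
      ≤ C ^ m * a * Real.exp b / (1 - r) * Real.exp (-(b / T) * t) := by
    have hden : 0 < 1 - r := by linarith
    have hceil : t / T ≤ (k₀ : ℝ) + 1 := by
      have h1 : t / T ≤ (⌈t / T⌉₊ : ℝ) := Nat.le_ceil _
      have h2 : ⌈t / T⌉₊ ≤ k₀ + 1 := by omega
      calc t / T ≤ (⌈t / T⌉₊ : ℝ) := h1
        _ ≤ (k₀ : ℝ) + 1 := by exact_mod_cast h2
    have hexp : Real.exp (-b * k₀) ≤ Real.exp b * Real.exp (-(b / T) * t) := by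
      rw [← Real.exp_add]
      apply Real.exp_le_exp.mpr
      have h3 : -(b / T) * t = -(b * (t / T)) := by field_simp
      rw [h3]
      nlinarith [mul_le_mul_of_nonneg_left hceil hb.le]
    calc C ^ m * a * Real.exp (-b * k₀) / (1 - r)
        = (C ^ m * a / (1 - r)) * Real.exp (-b * k₀) := by ring
      _ ≤ (C ^ m * a / (1 - r)) * (Real.exp b * Real.exp (-(b / T) * t)) := by
          apply mul_le_mul_of_nonneg_left hexp
          positivity
      _ = _ := by ring
  calc (∫⁻ ω, ENNReal.ofReal (euclNorm (x t ω) ^ m) ∂P)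
      ≤ ∫⁻ ω, ∑' j, f j ω ∂P := lintegral_mono_ae hpt
    _ = ∑' j, ∫⁻ ω, f j ω ∂P := lintegral_tsum fun j => (hfmeas j).aemeasurable
    _ ≤ ∑' j : ℕ, ENNReal.ofReal ((C ^ m * a * Real.exp (-b * k₀)) * r ^ j) :=
        ENNReal.tsum_le_tsum hterm
    _ = ENNReal.ofReal (C ^ m * a * Real.exp (-b * k₀) / (1 - r)) := htsum
    _ ≤ _ := ENNReal.ofReal_le_ofReal hfinal


end
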